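/- If H is a subgraph of a finite simple graph G (both having at least one vertex), then the maximum real root of the matching polynomial of H is at most the maximum real root of the matching polynomial of G. -/

import Mathlib

open Polynomial

/-- Number of matchings with exactly `k` edges in `G`. -/
noncomputable def matchingCount {V : Type*} [Fintype V] (G : SimpleGraph V) (k : ℕ) : ℕ :=
  Nat.card {s : Finset (Sym2 V) // s.card = k ∧ (∀ e ∈ s, e ∈ G.edgeSet) ∧
    ∀ e ∈ s, ∀ f ∈ s, e ≠ f → ∀ x : V, x ∈ e → x ∉ f}

/-- The matching polynomial `m(G,x) = ∑ (-1)^k m_k(G) x^(n-2k)`. -/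
noncomputable def matchPoly {V : Type*} [Fintype V] (G : SimpleGraph V) : Polynomial ℝ :=
  ∑ k ∈ Finset.range (Fintype.card V + 1),
    Polynomial.C ((-1 : ℝ) ^ k * (matchingCount G k : ℝ)) *
      Polynomial.X ^ (Fintype.card V - 2 * k)

/-- The maximum real root `t(G)` of the matching polynomial. -/
noncomputable def maxRoot {V : Type*} [Fintype V] (G : SimpleGraph V) : ℝ :=
  sSup {x : ℝ | (matchPoly G).eval x = 0}

set_option linter.unusedSectionVars false

namespace MP
open scoped Classical

variable {V : Type*} [Fintype V] [DecidableEq V]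

def good (G : SimpleGraph V) (S : Finset V) (s : Finset (Sym2 V)) : Prop :=
  (∀ e ∈ s, e ∈ G.edgeSet) ∧ (∀ e ∈ s, ∀ x ∈ e, x ∈ S) ∧
    (∀ e ∈ s, ∀ f ∈ s, e ≠ f → ∀ x : V, x ∈ e → x ∉ f)

open Classical in
noncomputable def mset (G : SimpleGraph V) (S : Finset V) (k : ℕ) : Finset (Finset (Sym2 V)) :=
  Finset.univ.filter (fun s => s.card = k ∧ good G S s)

open Classical in
lemma mem_mset {G : SimpleGraph V} {S : Finset V} {k : ℕ} {s : Finset (Sym2 V)} :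
    s ∈ mset G S k ↔ s.card = k ∧ good G S s := by
  simp [mset]

noncomputable def cnt (G : SimpleGraph V) (S : Finset V) (k : ℕ) : ℕ := (mset G S k).card

lemma good_mono_S {G : SimpleGraph V} {S T : Finset V} (hST : S ⊆ T) {s : Finset (Sym2 V)}
    (h : good G S s) : good G T s :=
  ⟨h.1, fun e he x hx => hST (h.2.1 e he x hx), h.2.2⟩

lemma cnt_vertex {G : SimpleGraph V} {S : Finset V} {u : V} (hu : u ∈ S) (k : ℕ) :
    cnt G S (k+1) = cnt G (S.erase u) (k+1) +
      ∑ v ∈ (S.erase u).filter (G.Adj u), cnt G ((S.erase u).erase v) k := by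
  classical
  set N := (S.erase u).filter (G.Adj u) with hN
  -- split matchings by whether u is covered
  have hcard : cnt G S (k+1) =
      ((mset G S (k+1)).filter (fun s => ∀ e ∈ s, u ∉ e)).card +
      ((mset G S (k+1)).filter (fun s => ¬ ∀ e ∈ s, u ∉ e)).card :=
    (Finset.card_filter_add_card_filter_not _).symm
  -- first part: matchings avoiding u = matchings of S.erase u
  have hA : (mset G S (k+1)).filter (fun s => ∀ e ∈ s, u ∉ e) = mset G (S.erase u) (k+1) := by
    ext s
    simp only [Finset.mem_filter, mem_mset]
    constructor
    · rintro ⟨⟨hc, h1, h2, h3⟩, havoid⟩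
      refine ⟨hc, h1, ?_, h3⟩
      intro e he x hx
      exact Finset.mem_erase.mpr ⟨fun hxu => havoid e he (hxu ▸ hx), h2 e he x hx⟩
    · rintro ⟨hc, hg⟩
      refine ⟨⟨hc, good_mono_S (Finset.erase_subset _ _) hg⟩, ?_⟩
      intro e he hue
      exact Finset.notMem_erase u S (hg.2.1 e he u hue)
  -- second part: biUnion over neighbors
  have hB : (mset G S (k+1)).filter (fun s => ¬ ∀ e ∈ s, u ∉ e) =
      N.biUnion (fun v => (mset G ((S.erase u).erase v) k).image (insert s(u,v))) := by
    ext s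
    simp only [Finset.mem_filter, mem_mset, Finset.mem_biUnion, Finset.mem_image]
    constructor
    · rintro ⟨⟨hc, h1, h2, h3⟩, hcov⟩
      push_neg at hcov
      obtain ⟨e, he, hue⟩ := hcov
      obtain ⟨v, rfl⟩ := Sym2.mem_iff_exists.mp hue
      have hadj : G.Adj u v := h1 _ he
      have hvS : v ∈ S := h2 _ he v (by simp)
      have hvN : v ∈ N := by
        simp only [hN, Finset.mem_filter, Finset.mem_erase]
        exact ⟨⟨hadj.ne', hvS⟩, hadj⟩
      refine ⟨v, hvN, s.erase s(u,v), ?_, Finset.insert_erase he⟩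
      have hcard' : (s.erase s(u,v)).card = k := by
        rw [Finset.card_erase_of_mem he, hc]; omega
      refine ⟨hcard', fun f hf => h1 f (Finset.mem_of_mem_erase hf), ?_, ?_⟩
      · intro f hf x hx
        have hfs := Finset.mem_of_mem_erase hf
        have hfne : s(u,v) ≠ f := fun h => (Finset.mem_erase.mp hf).1 h.symm
        have hxS : x ∈ S := h2 f hfs x hx
        have hxu : x ≠ u := by
          rintro rfl
          exact h3 _ he f hfs hfne x (by simp) hx
        have hxv : x ≠ v := by
          rintro rfl
          exact h3 _ he f hfs hfne x (by simp) hx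
        simp [Finset.mem_erase, hxu, hxv, hxS]
      · intro f hf g hg
        exact h3 f (Finset.mem_of_mem_erase hf) g (Finset.mem_of_mem_erase hg)
    · rintro ⟨v, hvN, m, ⟨hmc, hm1, hm2, hm3⟩, rfl⟩
      simp only [hN, Finset.mem_filter, Finset.mem_erase] at hvN
      obtain ⟨⟨hvu, hvS⟩, hadj⟩ := hvN
      have huNotm : ∀ f ∈ m, u ∉ f := by
        intro f hf hu'
        exact absurd (hm2 f hf u hu') (by simp)
      have hvNotm : ∀ f ∈ m, v ∉ f := by
        intro f hf hv'
        exact absurd (hm2 f hf v hv') (by simp)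
      have henotm : s(u,v) ∉ m := fun h => huNotm _ h (by simp)
      constructor
      · refine ⟨?_, ?_, ?_, ?_⟩
        · rw [Finset.card_insert_of_notMem henotm, hmc]
        · intro e he
          rcases Finset.mem_insert.mp he with rfl | he'
          · exact hadj
          · exact hm1 e he'
        · intro e he x hx
          rcases Finset.mem_insert.mp he with rfl | he'
          · rcases Sym2.mem_iff.mp hx with rfl | rfl
            · exact hu
            · exact hvS
          · exact (Finset.erase_subset _ _) ((Finset.erase_subset _ _) (hm2 e he' x hx))
        · intro e he f hf hef x hxe hxf
          rcases Finset.mem_insert.mp he with rfl | he' <;>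
            rcases Finset.mem_insert.mp hf with rfl | hf'
          · exact hef rfl
          · rcases Sym2.mem_iff.mp hxe with rfl | rfl
            · exact huNotm f hf' hxf
            · exact hvNotm f hf' hxf
          · rcases Sym2.mem_iff.mp hxf with rfl | rfl
            · exact huNotm e he' hxe
            · exact hvNotm e he' hxe
          · exact hm3 e he' f hf' hef x hxe hxf
      · push_neg
        exact ⟨s(u,v), Finset.mem_insert_self _ _, by simp⟩
  rw [hcard, hA, hB, Finset.card_biUnion]
  · congr 1
    refine Finset.sum_congr rfl ?_
    intro v hv
    rw [Finset.card_image_of_injOn, cnt]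
    intro m hm m' hm' heq
    replace hm := Finset.mem_coe.mp hm
    replace hm' := Finset.mem_coe.mp hm'
    have hmem : ∀ (m₀ : Finset (Sym2 V)), m₀ ∈ mset G ((S.erase u).erase v) k →
        s(u,v) ∉ m₀ := by
      intro m₀ hm₀
      rw [mem_mset] at hm₀
      intro h
      exact absurd (hm₀.2.2.1 _ h u (by simp)) (by simp)
    have ha := hmem m hm
    have hb := hmem m' hm'
    rw [← Finset.erase_insert ha, ← Finset.erase_insert hb, heq]
  · -- pairwise disjointness of images
    intro v hv v' hv' hvv'
    simp only [Finset.disjoint_left, Finset.mem_image]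
    rintro s ⟨m, hm, rfl⟩ ⟨m', hm', heq⟩
    rw [mem_mset] at hm hm'
    -- s(u,v') ∈ insert s(u,v) m
    have : s(u,v') ∈ insert s(u,v) m := heq ▸ Finset.mem_insert_self _ _
    have hadjv : G.Adj u v := (Finset.mem_filter.mp hv).2
    rcases Finset.mem_insert.mp this with h | h
    · rcases Sym2.eq_iff.mp h with ⟨-, h'⟩ | ⟨h1, h2⟩
      · exact hvv' h'.symm
      · exact hadjv.ne' h1.symm
    · exact absurd (hm.2.2.1 _ h u (by simp)) (by simp)

end MP

namespace MP2
open MP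
variable {V : Type*} [Fintype V] [DecidableEq V]

lemma cnt_edge {G : SimpleGraph V} {S : Finset V} {u v : V} (hadj : G.Adj u v)
    (hu : u ∈ S) (hv : v ∈ S) (k : ℕ) :
    cnt G S (k+1) = cnt (G.deleteEdges {s(u,v)}) S (k+1) + cnt G ((S.erase u).erase v) k := by
  classical
  set G' := G.deleteEdges {s(u,v)} with hG'
  have hcard : cnt G S (k+1) =
      ((mset G S (k+1)).filter (fun s => s(u,v) ∉ s)).card +
      ((mset G S (k+1)).filter (fun s => ¬ s(u,v) ∉ s)).card :=
    (Finset.card_filter_add_card_filter_not _).symm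
  have hA : (mset G S (k+1)).filter (fun s => s(u,v) ∉ s) = mset G' S (k+1) := by
    ext s
    simp only [Finset.mem_filter, mem_mset]
    constructor
    · rintro ⟨⟨hc, h1, h2, h3⟩, hne⟩
      refine ⟨hc, ?_, h2, h3⟩
      intro e he
      rw [hG', SimpleGraph.edgeSet_deleteEdges]
      refine ⟨h1 e he, ?_⟩
      simp only [Set.mem_singleton_iff]
      rintro rfl; exact hne he
    · rintro ⟨hc, h1, h2, h3⟩
      have h1' : ∀ e ∈ s, e ∈ G.edgeSet := by
        intro e he
        have := h1 e he
        rw [hG', SimpleGraph.edgeSet_deleteEdges] at this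
        exact this.1
      refine ⟨⟨hc, h1', h2, h3⟩, ?_⟩
      intro hmem
      have := h1 _ hmem
      rw [hG', SimpleGraph.edgeSet_deleteEdges] at this
      exact this.2 rfl
  have hB : (mset G S (k+1)).filter (fun s => ¬ s(u,v) ∉ s) =
      (mset G ((S.erase u).erase v) k).image (insert s(u,v)) := by
    ext s
    simp only [Finset.mem_filter, mem_mset, Finset.mem_image, not_not]
    constructor
    · rintro ⟨⟨hc, h1, h2, h3⟩, he⟩
      refine ⟨s.erase s(u,v), ?_, Finset.insert_erase he⟩
      refine ⟨by rw [Finset.card_erase_of_mem he, hc]; omega,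
        fun f hf => h1 f (Finset.mem_of_mem_erase hf), ?_, ?_⟩
      · intro f hf x hx
        have hfs := Finset.mem_of_mem_erase hf
        have hfne : s(u,v) ≠ f := fun h => (Finset.mem_erase.mp hf).1 h.symm
        have hxS : x ∈ S := h2 f hfs x hx
        have hxu : x ≠ u := by
          rintro rfl; exact h3 _ he f hfs hfne x (by simp) hx
        have hxv : x ≠ v := by
          rintro rfl; exact h3 _ he f hfs hfne x (by simp) hx
        simp [Finset.mem_erase, hxu, hxv, hxS]
      · intro f hf g hg
        exact h3 f (Finset.mem_of_mem_erase hf) g (Finset.mem_of_mem_erase hg)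
    · rintro ⟨m, ⟨hmc, hm1, hm2, hm3⟩, rfl⟩
      have huNotm : ∀ f ∈ m, u ∉ f := fun f hf hu' => absurd (hm2 f hf u hu') (by simp)
      have hvNotm : ∀ f ∈ m, v ∉ f := fun f hf hv' => absurd (hm2 f hf v hv') (by simp)
      have henotm : s(u,v) ∉ m := fun h => huNotm _ h (by simp)
      refine ⟨⟨?_, ?_, ?_, ?_⟩, Finset.mem_insert_self _ _⟩
      · rw [Finset.card_insert_of_notMem henotm, hmc]
      · intro e he
        rcases Finset.mem_insert.mp he with rfl | he'
        · exact hadj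
        · exact hm1 e he'
      · intro e he x hx
        rcases Finset.mem_insert.mp he with rfl | he'
        · rcases Sym2.mem_iff.mp hx with rfl | rfl
          · exact hu
          · exact hv
        · exact (Finset.erase_subset _ _) ((Finset.erase_subset _ _) (hm2 e he' x hx))
      · intro e he f hf hef x hxe hxf
        rcases Finset.mem_insert.mp he with rfl | he' <;>
          rcases Finset.mem_insert.mp hf with rfl | hf'
        · exact hef rfl
        · rcases Sym2.mem_iff.mp hxe with rfl | rfl
          · exact huNotm f hf' hxf
          · exact hvNotm f hf' hxf
        · rcases Sym2.mem_iff.mp hxf with rfl | rfl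
          · exact huNotm e he' hxe
          · exact hvNotm e he' hxe
        · exact hm3 e he' f hf' hef x hxe hxf
  rw [hcard, hA, hB, Finset.card_image_of_injOn, cnt, cnt]
  intro m hm m' hm' heq
  replace hm := Finset.mem_coe.mp hm
  replace hm' := Finset.mem_coe.mp hm'
  have hmem : ∀ (m₀ : Finset (Sym2 V)), m₀ ∈ mset G ((S.erase u).erase v) k →
      s(u,v) ∉ m₀ := by
    intro m₀ hm₀
    rw [mem_mset] at hm₀
    intro h
    exact absurd (hm₀.2.2.1 _ h u (by simp)) (by simp)
  rw [← Finset.erase_insert (hmem m hm), ← Finset.erase_insert (hmem m' hm'), heq]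

end MP2

namespace MP3
open MP MP2 Finset
variable {V : Type*} [Fintype V] [DecidableEq V]

lemma two_card_le {G : SimpleGraph V} {S : Finset V} {s : Finset (Sym2 V)}
    (h : good G S s) : 2 * s.card ≤ S.card := by
  classical
  induction s using Finset.induction generalizing S with
  | empty => simp
  | @insert e s he ih =>
      obtain ⟨h1, h2, h3⟩ := h
      have heE : e ∈ G.edgeSet := h1 e (Finset.mem_insert_self e s)
      induction e with
      | h a b =>
        have hab : G.Adj a b := heE
        have hane : a ≠ b := hab.ne
        have haS : a ∈ S := h2 _ (Finset.mem_insert_self _ s) a (by simp)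
        have hbS : b ∈ S := h2 _ (Finset.mem_insert_self _ s) b (by simp)
        have hgood : good G ((S.erase a).erase b) s := by
          refine ⟨fun f hf => h1 f (Finset.mem_insert_of_mem hf), ?_, ?_⟩
          · intro f hf x hx
            have hxS : x ∈ S := h2 f (Finset.mem_insert_of_mem hf) x hx
            have hne : s(a,b) ≠ f := by rintro rfl; exact he hf
            have hxa : x ≠ a := by
              intro hxa; subst hxa
              exact h3 _ (Finset.mem_insert_self _ _) f (Finset.mem_insert_of_mem hf) hne x
                (by simp) hx
            have hxb : x ≠ b := by
              intro hxb; subst hxb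
              exact h3 _ (Finset.mem_insert_self _ _) f (Finset.mem_insert_of_mem hf) hne x
                (by simp) hx
            simp [Finset.mem_erase, hxa, hxb, hxS]
          · intro f hf g hg hfg
            exact h3 f (Finset.mem_insert_of_mem hf) g (Finset.mem_insert_of_mem hg) hfg
        have hcard : ((S.erase a).erase b).card + 2 = S.card := by
          rw [Finset.card_erase_of_mem (by simp [Finset.mem_erase, hane.symm, hbS]),
            Finset.card_erase_of_mem haS]
          have h2' : 2 ≤ S.card := by
            have hsub : ({a, b} : Finset V) ⊆ S := by
              intro x hx; rcases Finset.mem_insert.mp hx with rfl | hx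
              · exact haS
              · rw [Finset.mem_singleton.mp hx]; exact hbS
            calc 2 = ({a,b} : Finset V).card := by
                  rw [Finset.card_insert_of_notMem (by simp [hane]), Finset.card_singleton]
              _ ≤ S.card := Finset.card_le_card hsub
          omega
        have := ih hgood
        rw [Finset.card_insert_of_notMem he]
        omega

lemma cnt_eq_zero' {G : SimpleGraph V} {S : Finset V} {k : ℕ} (h : S.card < 2 * k) :
    cnt G S k = 0 := by
  rw [cnt, Finset.card_eq_zero]
  ext s
  simp only [mem_mset, Finset.notMem_empty, iff_false, not_and]
  rintro rfl hg
  exact absurd (two_card_le hg) (by omega)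

lemma cnt_zero (G : SimpleGraph V) (S : Finset V) : cnt G S 0 = 1 := by
  have : mset G S 0 = {∅} := by
    ext s
    simp only [mem_mset, Finset.mem_singleton, Finset.card_eq_zero]
    constructor
    · rintro ⟨h, -⟩; exact h
    · rintro rfl; exact ⟨rfl, by simp [good]⟩
  simp [cnt, this]

noncomputable def mp (G : SimpleGraph V) (S : Finset V) : ℝ[X] :=
  ∑ k ∈ Finset.range (S.card + 1), C ((-1:ℝ)^k * cnt G S k) * X ^ (S.card - 2*k)

lemma mp_eq_sum_range (G : SimpleGraph V) (S : Finset V) {m : ℕ} (hm : S.card + 1 ≤ m) :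
    mp G S = ∑ k ∈ Finset.range m, C ((-1:ℝ)^k * cnt G S k) * X ^ (S.card - 2*k) := by
  rw [mp]
  refine Finset.sum_subset (Finset.range_subset_range.mpr hm) ?_
  intro k hk hk'
  simp only [Finset.mem_range, not_lt] at hk'
  have : cnt G S k = 0 := cnt_eq_zero' (by omega)
  simp [this]

open Classical in
lemma mp_vertex {G : SimpleGraph V} {S : Finset V} {u : V} (hu : u ∈ S) :
    mp G S = X * mp G (S.erase u) -
      ∑ v ∈ (S.erase u).filter (G.Adj u), mp G ((S.erase u).erase v) := by
  classical
  set n := S.card with hn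
  have hn1 : 1 ≤ n := Finset.card_pos.mpr ⟨u, hu⟩
  set S' := S.erase u with hS'
  have hS'c : S'.card = n - 1 := by rw [hS', Finset.card_erase_of_mem hu]
  set N := S'.filter (G.Adj u) with hNdef
  have h1 : X * mp G S' =
      ∑ k ∈ Finset.range (n+1), C ((-1:ℝ)^k * cnt G S' k) * X ^ (n - 2*k) := by
    rw [mp_eq_sum_range G S' (by omega : S'.card + 1 ≤ n + 1), Finset.mul_sum]
    refine Finset.sum_congr rfl ?_
    intro k hk
    by_cases hc : cnt G S' k = 0
    · simp [hc]
    · have h2k : 2 * k ≤ n - 1 := by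
        by_contra hcon
        exact hc (cnt_eq_zero' (by omega))
      have hexp : S'.card - 2*k + 1 = n - 2*k := by rw [hS'c]; omega
      rw [mul_comm, mul_assoc, ← pow_succ, hexp]
  have h2 : mp G S = X * mp G S' +
      ∑ k ∈ Finset.range (n+1),
        C ((-1:ℝ)^k * ((cnt G S k : ℝ) - cnt G S' k)) * X ^ (n - 2*k) := by
    rw [h1, ← Finset.sum_add_distrib, mp]
    refine Finset.sum_congr rfl ?_
    intro k hk
    rw [← add_mul, ← C_add]
    congr 2
    ring
  have hterm : ∀ k ∈ Finset.range n,
      C ((-1:ℝ)^(k+1) * ((cnt G S (k+1) : ℝ) - cnt G S' (k+1))) * X ^ (n - 2*(k+1))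
      = ∑ v ∈ N, -(C ((-1:ℝ)^k * (cnt G (S'.erase v) k : ℝ)) * X ^ ((n-2) - 2*k)) := by
    intro k _
    have hd : ((cnt G S (k+1) : ℝ) - cnt G S' (k+1)) = ∑ v ∈ N, (cnt G (S'.erase v) k : ℝ) := by
      rw [cnt_vertex hu k]
      push_cast
      ring
    have hexp : n - 2*(k+1) = (n-2) - 2*k := by omega
    rw [hd, hexp, Finset.mul_sum, map_sum, Finset.sum_mul]
    refine Finset.sum_congr rfl fun v _ => ?_
    rw [show ((-1:ℝ)^(k+1) * (cnt G (S'.erase v) k : ℝ))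
        = -((-1)^k * (cnt G (S'.erase v) k : ℝ)) by ring, map_neg, neg_mul]
  have h3 : ∑ k ∈ Finset.range (n+1),
        C ((-1:ℝ)^k * ((cnt G S k : ℝ) - cnt G S' k)) * X ^ (n - 2*k) =
      - ∑ v ∈ N, mp G (S'.erase v) := by
    rw [Finset.sum_range_succ']
    have hzero : C ((-1:ℝ)^0 * ((cnt G S 0 : ℝ) - cnt G S' 0)) * X ^ (n - 2*0) = 0 := by
      rw [cnt_zero, cnt_zero]
      simp
    rw [hzero, add_zero, Finset.sum_congr rfl hterm, Finset.sum_comm]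
    have hv' : ∀ v ∈ N, ∑ k ∈ Finset.range n,
        -(C ((-1:ℝ)^k * (cnt G (S'.erase v) k : ℝ)) * X ^ ((n-2) - 2*k))
        = -(mp G (S'.erase v)) := by
      intro v hv
      have hc : (S'.erase v).card = n - 2 := by
        rw [Finset.card_erase_of_mem (Finset.mem_of_mem_filter v hv), hS'c]; omega
      rw [Finset.sum_neg_distrib]
      congr 1
      rw [mp_eq_sum_range G (S'.erase v) (m := n) (by omega), hc]
    rw [Finset.sum_congr rfl hv', Finset.sum_neg_distrib]
  rw [h2, h3]
  ring

end MP3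

namespace MP4
open MP MP2 MP3 Finset
variable {V : Type*} [Fintype V] [DecidableEq V]

lemma mp_edge {G : SimpleGraph V} {S : Finset V} {u v : V} (hadj : G.Adj u v)
    (hu : u ∈ S) (hv : v ∈ S) :
    mp G S = mp (G.deleteEdges {s(u,v)}) S - mp G ((S.erase u).erase v) := by
  classical
  set G' := G.deleteEdges {s(u,v)} with hG'
  set n := S.card with hn
  have hvS' : v ∈ S.erase u := Finset.mem_erase.mpr ⟨hadj.ne.symm, hv⟩
  have hn2 : 2 ≤ n := by
    have : ({u, v} : Finset V) ⊆ S := by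
      intro x hx; rcases Finset.mem_insert.mp hx with rfl | hx
      · exact hu
      · rw [Finset.mem_singleton.mp hx]; exact hv
    calc 2 = ({u,v} : Finset V).card := by
          rw [Finset.card_insert_of_notMem (by simp [hadj.ne]), Finset.card_singleton]
      _ ≤ n := Finset.card_le_card this
  have hcc : ((S.erase u).erase v).card = n - 2 := by
    rw [Finset.card_erase_of_mem hvS', Finset.card_erase_of_mem hu]; omega
  have h2 : mp G S = mp G' S +
      ∑ k ∈ Finset.range (n+1),
        C ((-1:ℝ)^k * ((cnt G S k : ℝ) - cnt G' S k)) * X ^ (n - 2*k) := by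
    rw [mp, mp, ← Finset.sum_add_distrib]
    refine Finset.sum_congr rfl ?_
    intro k hk
    rw [← add_mul, ← C_add]
    congr 2
    ring
  have hterm : ∀ k ∈ Finset.range n,
      C ((-1:ℝ)^(k+1) * ((cnt G S (k+1) : ℝ) - cnt G' S (k+1))) * X ^ (n - 2*(k+1))
      = -(C ((-1:ℝ)^k * (cnt G ((S.erase u).erase v) k : ℝ)) * X ^ ((n-2) - 2*k)) := by
    intro k _
    have hd : ((cnt G S (k+1) : ℝ) - cnt G' S (k+1))
        = (cnt G ((S.erase u).erase v) k : ℝ) := by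
      rw [cnt_edge hadj hu hv k]
      push_cast
      ring
    have hexp : n - 2*(k+1) = (n-2) - 2*k := by omega
    rw [hd, hexp, show ((-1:ℝ)^(k+1) * (cnt G ((S.erase u).erase v) k : ℝ))
        = -((-1)^k * (cnt G ((S.erase u).erase v) k : ℝ)) by ring, map_neg, neg_mul]
  have h3 : ∑ k ∈ Finset.range (n+1),
        C ((-1:ℝ)^k * ((cnt G S k : ℝ) - cnt G' S k)) * X ^ (n - 2*k) =
      -(mp G ((S.erase u).erase v)) := by
    rw [Finset.sum_range_succ']
    have hzero : C ((-1:ℝ)^0 * ((cnt G S 0 : ℝ) - cnt G' S 0)) * X ^ (n - 2*0) = 0 := by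
      rw [cnt_zero, cnt_zero]
      simp
    rw [hzero, add_zero, Finset.sum_congr rfl hterm, Finset.sum_neg_distrib]
    congr 1
    rw [mp_eq_sum_range G ((S.erase u).erase v) (m := n) (by omega), hcc]
  rw [h2, h3]
  ring

end MP4

namespace MP5
open MP MP2 MP3 MP4 Finset Polynomial
variable {V : Type*} [Fintype V] [DecidableEq V]

lemma mp_coeff_card (G : SimpleGraph V) (S : Finset V) : (mp G S).coeff S.card = 1 := by
  rw [mp, Polynomial.finset_sum_coeff]
  rw [Finset.sum_eq_single 0]
  · simp [cnt_zero, Polynomial.coeff_C_mul, Polynomial.coeff_X_pow]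
  · intro k hk hk0
    by_cases hc : cnt G S k = 0
    · simp [hc]
    · have h2k : 2 * k ≤ S.card := by
        by_contra hcon
        exact hc (cnt_eq_zero' (by omega))
      rw [Polynomial.coeff_C_mul, Polynomial.coeff_X_pow, if_neg (by omega), mul_zero]
  · intro h
    simp at h

lemma mp_natDegree_le (G : SimpleGraph V) (S : Finset V) : (mp G S).natDegree ≤ S.card := by
  rw [mp]
  refine Polynomial.natDegree_sum_le_of_forall_le _ _ ?_
  intro k hk
  refine (Polynomial.natDegree_mul_le).trans ?_
  simp only [Polynomial.natDegree_C, Polynomial.natDegree_X_pow, zero_add]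
  omega

lemma mp_monic (G : SimpleGraph V) (S : Finset V) : (mp G S).Monic :=
  Polynomial.monic_of_natDegree_le_of_coeff_eq_one S.card (mp_natDegree_le G S)
    (mp_coeff_card G S)

lemma mp_ne_zero (G : SimpleGraph V) (S : Finset V) : mp G S ≠ 0 :=
  (mp_monic G S).ne_zero

lemma mp_natDegree (G : SimpleGraph V) (S : Finset V) : (mp G S).natDegree = S.card :=
  le_antisymm (mp_natDegree_le G S)
    (Polynomial.le_natDegree_of_ne_zero (by rw [mp_coeff_card]; exact one_ne_zero))

lemma mp_empty (G : SimpleGraph V) : mp G (∅ : Finset V) = 1 := by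
  rw [mp]
  simp [cnt_zero]

lemma mp_eval_neg (G : SimpleGraph V) (S : Finset V) (x : ℝ) :
    (mp G S).eval (-x) = (-1)^S.card * (mp G S).eval x := by
  rw [mp]
  simp only [Polynomial.eval_finset_sum, Polynomial.eval_mul, Polynomial.eval_C,
    Polynomial.eval_pow, Polynomial.eval_X, Finset.mul_sum]
  refine Finset.sum_congr rfl ?_
  intro k hk
  by_cases hc : cnt G S k = 0
  · simp [hc]
  · have h2k : 2 * k ≤ S.card := by
      by_contra hcon
      exact hc (cnt_eq_zero' (by omega))
    have hpow : (-x)^(S.card - 2*k) = (-1)^S.card * x^(S.card - 2*k) := by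
      rw [neg_pow]
      congr 1
      have : (-1:ℝ)^(S.card - 2*k) * (-1)^(2*k) = (-1)^S.card := by
        rw [← pow_add]
        congr 1
        omega
      have h2 : (-1:ℝ)^(2*k) = 1 := by
        rw [pow_mul]
        norm_num
      rw [← this, h2, mul_one]
    rw [hpow]
    ring

open Complex in
/-- Heilmann–Lieb: the matching polynomial does not vanish on the upper half plane,
and vertex-deletion ratios map UHP to UHP. -/
lemma uhp (G : SimpleGraph V) (z : ℂ) (hz : 0 < z.im) :
    ∀ S : Finset V, (aeval z (mp G S) ≠ 0 ∧
      ∀ u ∈ S, 0 < ((aeval z (mp G S)) / (aeval z (mp G (S.erase u)))).im) := by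
  classical
  suffices key : ∀ m : ℕ, ∀ S : Finset V, S.card ≤ m → (aeval z (mp G S) ≠ 0 ∧
      ∀ u ∈ S, 0 < ((aeval z (mp G S)) / (aeval z (mp G (S.erase u)))).im) by
    intro S; exact key S.card S le_rfl
  intro m
  induction m with
  | zero =>
      intro S hS
      have : S = ∅ := Finset.card_eq_zero.mp (Nat.le_zero.mp hS)
      subst this
      refine ⟨by simp [mp_empty], ?_⟩
      intro u hu
      exact absurd hu (Finset.notMem_empty u)
  | succ m ih =>
      intro S hS
      by_cases hSm : S.card ≤ m
      · exact ih S hSm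
      have hScard : S.card = m + 1 := by omega
      have hratio : ∀ u ∈ S, 0 < ((aeval z (mp G S)) / (aeval z (mp G (S.erase u)))).im := by
        intro u hu
        set S' := S.erase u with hS'
        have hS'card : S'.card ≤ m := by
          rw [hS', Finset.card_erase_of_mem hu]; omega
        set N := S'.filter (G.Adj u) with hN
        set B := aeval z (mp G S') with hB
        have hBne : B ≠ 0 := (ih S' hS'card).1
        have hval : aeval z (mp G S) = z * B - ∑ v ∈ N, aeval z (mp G (S'.erase v)) := by
          rw [mp_vertex hu]
          simp [hB]
          rfl
        have hsum : (aeval z (mp G S)) / B = z - ∑ v ∈ N, (aeval z (mp G (S'.erase v)) / B) := by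
          rw [hval, sub_div, mul_div_assoc, div_self hBne, mul_one, Finset.sum_div]
        rw [hsum]
        have himneg : ∀ v ∈ N, (aeval z (mp G (S'.erase v)) / B).im < 0 := by
          intro v hvN
          have hvS' : v ∈ S' := Finset.mem_of_mem_filter v hvN
          set Cv := aeval z (mp G (S'.erase v)) with hCv
          have hCvne : Cv ≠ 0 := by
            have hcard : (S'.erase v).card ≤ m := by
              rw [Finset.card_erase_of_mem hvS']; omega
            exact (ih (S'.erase v) hcard).1
          have hR : 0 < (B / Cv).im := (ih S' hS'card).2 v hvS'
          have hRne : B / Cv ≠ 0 := div_ne_zero hBne hCvne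
          have : Cv / B = (B / Cv)⁻¹ := by
            rw [inv_div]
          rw [this, Complex.inv_im]
          have hns : 0 < Complex.normSq (B / Cv) := Complex.normSq_pos.mpr hRne
          exact div_neg_of_neg_of_pos (neg_neg_of_pos hR) hns
        have hsumim : (∑ v ∈ N, (aeval z (mp G (S'.erase v)) / B)).im ≤ 0 := by
          rw [Complex.im_sum]
          exact Finset.sum_nonpos (fun v hv => le_of_lt (himneg v hv))
        rw [Complex.sub_im]
        linarith
      refine ⟨?_, hratio⟩
      have hne : S.Nonempty := Finset.card_pos.mp (by omega)
      obtain ⟨u, hu⟩ := hne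
      intro hA
      have := hratio u hu
      rw [hA, zero_div] at this
      simp at this

end MP5

namespace MP6
open MP MP2 MP3 MP4 MP5 Finset Polynomial
variable {V : Type*} [Fintype V] [DecidableEq V]

lemma root_im_eq_zero {G : SimpleGraph V} {S : Finset V} {z : ℂ}
    (hz : aeval z (mp G S) = 0) : z.im = 0 := by
  by_contra h
  rcases lt_or_gt_of_ne h with hlt | hgt
  · -- im < 0 : use conjugate
    have hconj : aeval ((starRingEnd ℂ) z) (mp G S) = 0 := by
      rw [Polynomial.aeval_conj, hz, map_zero]
    have : 0 < ((starRingEnd ℂ) z).im := by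
      rw [Complex.conj_im]; linarith
    exact (uhp G _ this S).1 hconj
  · exact (uhp G z hgt S).1 hz

/-- Any real polynomial root bound set. -/
noncomputable def tt (G : SimpleGraph V) (S : Finset V) : ℝ :=
  sSup {x : ℝ | (mp G S).eval x = 0}

lemma roots_finite (G : SimpleGraph V) (S : Finset V) :
    {x : ℝ | (mp G S).eval x = 0}.Finite :=
  Polynomial.finite_setOf_isRoot (mp_ne_zero G S)

lemma roots_bddAbove (G : SimpleGraph V) (S : Finset V) :
    BddAbove {x : ℝ | (mp G S).eval x = 0} :=
  (roots_finite G S).bddAbove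

lemma mp_degree_pos (G : SimpleGraph V) {S : Finset V} (hS : S.Nonempty) :
    0 < (mp G S).degree :=
  Polynomial.natDegree_pos_iff_degree_pos.mp
    (by rw [mp_natDegree]; exact Finset.card_pos.mpr hS)

lemma exists_real_root (G : SimpleGraph V) {S : Finset V} (hS : S.Nonempty) :
    ∃ x : ℝ, (mp G S).eval x = 0 := by
  set q := (mp G S).map (algebraMap ℝ ℂ) with hq
  have hqdeg : q.degree ≠ 0 := by
    rw [hq, (mp_monic G S).degree_map]
    exact ne_of_gt (mp_degree_pos G hS)
  obtain ⟨z, hz⟩ := IsAlgClosed.exists_root q hqdeg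
  have haev : aeval z (mp G S) = 0 := by
    rwa [aeval_def, ← Polynomial.eval_map]
  have him : z.im = 0 := root_im_eq_zero haev
  refine ⟨z.re, ?_⟩
  have hzre : (z.re : ℂ) = z := Complex.ext rfl him.symm
  have : aeval ((z.re : ℝ) : ℂ) (mp G S) = 0 := by rw [hzre]; exact haev
  have h2 : (((mp G S).eval z.re : ℝ) : ℂ) = 0 := by
    rw [← this, ← Complex.coe_algebraMap, Polynomial.aeval_algebraMap_apply]
    simp
  exact_mod_cast h2

lemma roots_nonempty (G : SimpleGraph V) {S : Finset V} (hS : S.Nonempty) :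
    {x : ℝ | (mp G S).eval x = 0}.Nonempty := exists_real_root G hS

lemma tt_mem (G : SimpleGraph V) {S : Finset V} (hS : S.Nonempty) :
    (mp G S).eval (tt G S) = 0 :=
  (roots_nonempty G hS).csSup_mem (roots_finite G S)

lemma le_tt {G : SimpleGraph V} {S : Finset V} {x : ℝ} (hx : (mp G S).eval x = 0) :
    x ≤ tt G S :=
  le_csSup (roots_bddAbove G S) hx

lemma tt_nonneg (G : SimpleGraph V) {S : Finset V} (hS : S.Nonempty) : 0 ≤ tt G S := by
  obtain ⟨x, hx⟩ := exists_real_root G hS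
  have hneg : (mp G S).eval (-x) = 0 := by
    rw [mp_eval_neg, hx, mul_zero]
  rcases le_or_gt 0 x with h | h
  · exact h.trans (le_tt hx)
  · have := le_tt hneg
    linarith

lemma eval_pos_of_gt_tt (G : SimpleGraph V) (S : Finset V) {x : ℝ} (hx : tt G S < x) :
    0 < (mp G S).eval x := by
  rcases Finset.eq_empty_or_nonempty S with rfl | hS
  · simp [mp_empty]
  by_contra hle
  push_neg at hle
  have hx0 : (mp G S).eval x ≠ 0 := fun h => absurd (le_tt h) (not_le.mpr hx)
  have hlt : (mp G S).eval x < 0 := lt_of_le_of_ne hle hx0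
  have htop : Filter.Tendsto (fun y => (mp G S).eval y) Filter.atTop Filter.atTop := by
    refine Polynomial.tendsto_atTop_of_leadingCoeff_nonneg _ (mp_degree_pos G hS) ?_
    rw [(mp_monic G S).leadingCoeff]
    norm_num
  obtain ⟨y, hy1, hxy⟩ :=
    ((htop.eventually_ge_atTop 1).and (Filter.eventually_ge_atTop x)).exists
  have hivt := intermediate_value_Icc hxy ((mp G S).continuousOn)
  have h0mem : (0:ℝ) ∈ Set.Icc ((mp G S).eval x) ((mp G S).eval y) :=
    ⟨le_of_lt hlt, by linarith⟩
  obtain ⟨r, hr, hr0⟩ := hivt h0mem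
  have : r ≤ tt G S := le_tt hr0
  have : x ≤ r := hr.1
  linarith

end MP6

namespace MP7
open MP MP2 MP3 MP4 MP5 MP6 Finset Polynomial Filter Complex
variable {V : Type*} [Fintype V] [DecidableEq V]

lemma evalc (p : ℝ[X]) (r : ℝ) :
    (p.map (algebraMap ℝ ℂ)).eval (r : ℂ) = ((p.eval r : ℝ) : ℂ) := by
  rw [← Complex.coe_algebraMap, Polynomial.eval_map, Polynomial.eval₂_at_apply]

lemma aeval_eq_eval_map (p : ℝ[X]) (z : ℂ) :
    aeval z p = (p.map (algebraMap ℝ ℂ)).eval z := by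
  rw [aeval_def, Polynomial.eval_map]

lemma slope_re (w : ℂ) (y : ℝ) (hy : y ≠ 0) : (w / (↑y * Complex.I)).re = w.im / y := by
  have hyc : (y : ℂ) ≠ 0 := Complex.ofReal_ne_zero.mpr hy
  rw [div_eq_mul_inv, mul_inv, Complex.inv_I]
  simp [Complex.mul_re, Complex.mul_im, Complex.inv_re, Complex.inv_im, Complex.normSq,
    div_eq_mul_inv]
  left
  field_simp

lemma path_tendsto (x : ℝ) :
    Tendsto (fun y : ℝ => (x : ℂ) + y * Complex.I) (nhdsWithin 0 (Set.Ioi 0))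
      (nhdsWithin (x:ℂ) {(x:ℂ)}ᶜ) := by
  apply tendsto_nhdsWithin_of_tendsto_nhds_of_eventually_within
  · have : Tendsto (fun y : ℝ => (x : ℂ) + y * Complex.I) (nhds 0)
        (nhds ((x:ℂ) + (0:ℝ) * Complex.I)) := by
      refine Tendsto.add tendsto_const_nhds (Tendsto.mul ?_ tendsto_const_nhds)
      exact (Complex.continuous_ofReal.tendsto 0)
    simpa using this.mono_left nhdsWithin_le_nhds
  · filter_upwards [self_mem_nhdsWithin] with y hy
    simp only [Set.mem_compl_iff, Set.mem_singleton_iff]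
    intro h
    have him : ((x:ℂ) + y * Complex.I).im = (x:ℂ).im := by rw [h]
    simp at him
    rw [Set.mem_Ioi] at hy
    rw [him] at hy
    exact lt_irrefl 0 hy

/-- The numerator of the derivative of `mp G S / mp G (S.erase u)` is nonnegative
wherever the denominator does not vanish. -/
lemma num_nonneg {G : SimpleGraph V} {S : Finset V} {u : V} (hu : u ∈ S) {x : ℝ}
    (hQ : (mp G (S.erase u)).eval x ≠ 0) :
    0 ≤ (mp G S).derivative.eval x * (mp G (S.erase u)).eval x -
        (mp G S).eval x * (mp G (S.erase u)).derivative.eval x := by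
  classical
  set P := mp G S with hP
  set Q := mp G (S.erase u) with hQdef
  set Pc := P.map (algebraMap ℝ ℂ) with hPc
  set Qc := Q.map (algebraMap ℝ ℂ) with hQc
  have hQcx : Qc.eval (x:ℂ) ≠ 0 := by
    rw [hQc, evalc]
    exact_mod_cast hQ
  set Gc : ℂ → ℂ := fun z => Pc.eval z / Qc.eval z with hGc
  set D : ℂ := (Pc.derivative.eval (x:ℂ) * Qc.eval (x:ℂ) -
      Pc.eval (x:ℂ) * Qc.derivative.eval (x:ℂ)) / (Qc.eval (x:ℂ))^2 with hD
  have hderiv : HasDerivAt Gc D (x:ℂ) := by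
    exact HasDerivAt.div (Polynomial.hasDerivAt Pc (x:ℂ)) (Polynomial.hasDerivAt Qc (x:ℂ)) hQcx
  have hslope := hasDerivAt_iff_tendsto_slope.mp hderiv
  have hcomp := hslope.comp (path_tendsto x)
  have hre : Tendsto (fun y : ℝ => (slope Gc (x:ℂ) ((x:ℂ) + y * Complex.I)).re)
      (nhdsWithin 0 (Set.Ioi 0)) (nhds D.re) :=
    (Complex.continuous_re.tendsto D).comp hcomp
  have hpos : ∀ y ∈ Set.Ioi (0:ℝ),
      0 ≤ (slope Gc (x:ℂ) ((x:ℂ) + y * Complex.I)).re := by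
    intro y hy
    rw [Set.mem_Ioi] at hy
    have hz : ((x:ℂ) + y * Complex.I).im = y := by simp
    have huhp := (uhp G ((x:ℂ) + y * Complex.I) (by rw [hz]; exact hy) S).2 u hu
    -- Gc at the point has positive imaginary part
    have hGcim : 0 < (Gc ((x:ℂ) + y * Complex.I)).im := by
      rw [hGc]
      simp only
      rw [← aeval_eq_eval_map, ← aeval_eq_eval_map]
      exact huhp
    have hGcx_real : (Gc (x:ℂ)).im = 0 := by
      rw [hGc]
      simp only
      rw [hPc, hQc, evalc, evalc]
      rw [← Complex.ofReal_div]
      simp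
    rw [slope_def_field]
    have hsub : ((x:ℂ) + y * Complex.I) - (x:ℂ) = ↑y * Complex.I := by ring
    rw [hsub, slope_re _ y (ne_of_gt hy)]
    rw [Complex.sub_im, hGcx_real, sub_zero]
    positivity
  have hDre : 0 ≤ D.re := by
    refine ge_of_tendsto hre ?_
    filter_upwards [self_mem_nhdsWithin] with y hy
    exact hpos y hy
  -- compute D.re
  have hDval : D = (((P.derivative.eval x * Q.eval x - P.eval x * Q.derivative.eval x) /
      (Q.eval x)^2 : ℝ) : ℂ) := by
    rw [hD, hPc, hQc, Polynomial.derivative_map, Polynomial.derivative_map,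
      evalc, evalc, evalc, evalc]
    push_cast
    ring
  rw [hDval] at hDre
  simp only [Complex.ofReal_re] at hDre
  have hQ2 : 0 < (Q.eval x)^2 := by positivity
  calc (0:ℝ) = 0 * (Q.eval x)^2 := by ring
    _ ≤ ((P.derivative.eval x * Q.eval x - P.eval x * Q.derivative.eval x) /
        (Q.eval x)^2) * (Q.eval x)^2 := by
        apply mul_le_mul_of_nonneg_right hDre (le_of_lt hQ2)
    _ = P.derivative.eval x * Q.eval x - P.eval x * Q.derivative.eval x := by
        field_simp

end MP7

namespace MP8
open MP MP2 MP3 MP4 MP5 MP6 MP7 Finset Polynomial Filter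
variable {V : Type*} [Fintype V] [DecidableEq V]

lemma tt_empty (G : SimpleGraph V) : tt G (∅ : Finset V) = 0 := by
  have hset : {x : ℝ | (mp G (∅ : Finset V)).eval x = 0} = ∅ := by
    ext x
    simp [mp_empty]
  rw [tt, hset, Real.sSup_empty]

set_option maxHeartbeats 800000 in
/-- Godsil's lemma: deleting a vertex does not increase the largest root. -/
lemma tt_erase_le {G : SimpleGraph V} {S : Finset V} {u : V} (hu : u ∈ S) :
    tt G (S.erase u) ≤ tt G S := by
  classical
  set S' := S.erase u with hS'
  rcases Finset.eq_empty_or_nonempty S' with hE | hS'ne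
  · rw [hE, tt_empty]
    exact tt_nonneg G ⟨u, hu⟩
  by_contra hcon
  push_neg at hcon
  set s := tt G S' with hs
  set t := tt G S with ht
  -- hcon : t < s
  set P := mp G S with hP
  set Q := mp G S' with hQ
  have hQs : Q.eval s = 0 := tt_mem G hS'ne
  have hPpos : ∀ x : ℝ, s ≤ x → 0 < P.eval x := by
    intro x hx
    exact eval_pos_of_gt_tt G S (lt_of_lt_of_le hcon hx)
  have hQpos : ∀ x : ℝ, s < x → 0 < Q.eval x := fun x hx => eval_pos_of_gt_tt G S' hx
  -- the rational function g = P/Q is monotone on (s, ∞)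
  set g : ℝ → ℝ := fun x => P.eval x / Q.eval x with hg
  have hderiv : ∀ x ∈ Set.Ioi s, HasDerivAt g
      ((P.derivative.eval x * Q.eval x - P.eval x * Q.derivative.eval x) / (Q.eval x)^2) x := by
    intro x hx
    exact HasDerivAt.div (Polynomial.hasDerivAt P x) (Polynomial.hasDerivAt Q x)
      (ne_of_gt (hQpos x hx))
  have hmono : MonotoneOn g (Set.Ioi s) := by
    refine monotoneOn_of_deriv_nonneg (convex_Ioi s) ?_ ?_ ?_
    · intro x hx
      exact ((hderiv x hx).continuousAt).continuousWithinAt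
    · intro x hx
      rw [interior_Ioi] at hx
      exact (hderiv x hx).differentiableAt.differentiableWithinAt
    · intro x hx
      rw [interior_Ioi] at hx
      rw [(hderiv x hx).deriv]
      have hnum := num_nonneg hu (ne_of_gt (hQpos x hx))
      have hQ2 : (0:ℝ) < (Q.eval x)^2 := pow_pos (hQpos x hx) 2
      exact div_nonneg hnum (le_of_lt hQ2)
  -- bound: P.eval x ≤ g (s+1) * Q.eval x on (s, s+1]
  set Cb := g (s+1) with hCb
  have hbound : ∀ x : ℝ, s < x → x ≤ s + 1 → P.eval x ≤ Cb * Q.eval x := by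
    intro x hx1 hx2
    have hgx : g x ≤ Cb := by
      refine hmono (Set.mem_Ioi.mpr hx1) (Set.mem_Ioi.mpr (by linarith)) hx2
    have hQx : 0 < Q.eval x := hQpos x hx1
    calc P.eval x = g x * Q.eval x := by
          rw [hg]; field_simp
      _ ≤ Cb * Q.eval x := mul_le_mul_of_nonneg_right hgx (le_of_lt hQx)
  -- take the limit x → s+
  have hcontf : Continuous (fun x => Cb * Q.eval x - P.eval x) :=
    (continuous_const.mul Q.continuous).sub P.continuous
  have hTend : Tendsto (fun x => Cb * Q.eval x - P.eval x) (nhdsWithin s (Set.Ioi s))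
      (nhds (Cb * Q.eval s - P.eval s)) :=
    (hcontf.tendsto s).mono_left nhdsWithin_le_nhds
  have hEv : ∀ᶠ x in nhdsWithin s (Set.Ioi s), 0 ≤ Cb * Q.eval x - P.eval x := by
    filter_upwards [Ioc_mem_nhdsGT_of_mem (Set.mem_Ico.mpr ⟨le_refl s, lt_add_one s⟩)]
      with x hx
    have := hbound x hx.1 hx.2
    linarith
  have hlim : 0 ≤ Cb * Q.eval s - P.eval s := ge_of_tendsto hTend hEv
  rw [hQs, mul_zero, zero_sub] at hlim
  have := hPpos s le_rfl
  linarith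

end MP8

namespace MP9
open MP MP2 MP3 MP4 MP5 MP6 MP7 MP8 Finset Polynomial
variable {V : Type*} [Fintype V] [DecidableEq V]

lemma tt_erase_le' (G : SimpleGraph V) (S : Finset V) (u : V) :
    tt G (S.erase u) ≤ tt G S := by
  by_cases hu : u ∈ S
  · exact tt_erase_le hu
  · rw [Finset.erase_eq_of_notMem hu]

lemma tt_deleteEdge_le [Nonempty V] {G : SimpleGraph V} {u v : V} (hadj : G.Adj u v) :
    tt (G.deleteEdges {s(u,v)}) (Finset.univ : Finset V) ≤ tt G Finset.univ := by
  classical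
  set G' := G.deleteEdges {s(u,v)} with hG'
  have huniv : (Finset.univ : Finset V).Nonempty := Finset.univ_nonempty
  refine Real.sSup_le ?_ (tt_nonneg G huniv)
  intro x hx
  simp only [Set.mem_setOf_eq] at hx
  by_contra hgt
  push_neg at hgt
  have hkey : mp G' (Finset.univ : Finset V) = mp G Finset.univ +
      mp G ((Finset.univ.erase u).erase v) := by
    have := mp_edge hadj (Finset.mem_univ u) (Finset.mem_univ v)
    rw [← hG'] at this
    rw [this]; ring
  have h1 : 0 < (mp G Finset.univ).eval x := eval_pos_of_gt_tt G _ hgt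
  have h2 : 0 < (mp G ((Finset.univ.erase u).erase v)).eval x := by
    refine eval_pos_of_gt_tt G _ (lt_of_le_of_lt ?_ hgt)
    exact le_trans (tt_erase_le' G _ v) (tt_erase_le' G _ u)
  rw [hkey] at hx
  simp only [Polynomial.eval_add] at hx
  linarith

lemma tt_mono [Nonempty V] {G H : SimpleGraph V} (hle : H ≤ G) :
    tt H Finset.univ ≤ tt G Finset.univ := by
  classical
  obtain ⟨n, hn⟩ : ∃ n, (G.edgeSet \ H.edgeSet).ncard = n := ⟨_, rfl⟩
  induction n generalizing G with
  | zero =>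
      have hfin : (G.edgeSet \ H.edgeSet).Finite := Set.toFinite _
      have hempty : G.edgeSet \ H.edgeSet = ∅ := by
        rwa [← Set.ncard_eq_zero hfin]
      have hsub : G.edgeSet ⊆ H.edgeSet := by
        intro e he
        by_contra h
        exact absurd (Set.mem_diff_of_mem he h) (by rw [hempty]; exact Set.notMem_empty e)
      have : G = H := by
        rw [← SimpleGraph.edgeSet_inj]
        exact le_antisymm hsub (SimpleGraph.edgeSet_mono hle)
      rw [this]
  | succ n ih =>
      have hne : (G.edgeSet \ H.edgeSet).Nonempty := by
        rw [Set.nonempty_iff_ne_empty]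
        intro h
        rw [h, Set.ncard_empty] at hn
        omega
      obtain ⟨e, he⟩ := hne
      induction e with
      | h a b =>
        have hGadj : G.Adj a b := he.1
        have hHadj : s(a,b) ∉ H.edgeSet := he.2
        set G' := G.deleteEdges {s(a,b)} with hG'
        have hle' : H ≤ G' := by
          intro x y hxy
          rw [hG', SimpleGraph.deleteEdges_adj]
          refine ⟨hle hxy, ?_⟩
          simp only [Set.mem_singleton_iff]
          intro hs
          apply hHadj
          rw [← hs]
          exact hxy
        have hcard : (G'.edgeSet \ H.edgeSet).ncard = n := by
          rw [hG', SimpleGraph.edgeSet_deleteEdges]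
          have : (G.edgeSet \ {s(a,b)}) \ H.edgeSet = (G.edgeSet \ H.edgeSet) \ {s(a,b)} := by
            ext f
            simp only [Set.mem_diff, Set.mem_singleton_iff]
            tauto
          rw [this]
          have := Set.ncard_diff_singleton_of_mem he
          omega
        exact le_trans (ih hle' hcard) (tt_deleteEdge_le hGadj)

end MP9

namespace MP10
open MP MP2 MP3 MP4 MP5 MP6 MP7 MP8 MP9 Finset Polynomial

variable {W V : Type*} [Fintype W] [Fintype V] [DecidableEq W] [DecidableEq V]

lemma mem_edgeSet_map_iff (f : W ↪ V) (H : SimpleGraph W) (e : Sym2 W) :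
    Sym2.map f e ∈ (H.map f).edgeSet ↔ e ∈ H.edgeSet := by
  induction e with
  | h x y =>
    simp only [Sym2.map_pair_eq, SimpleGraph.mem_edgeSet]
    exact SimpleGraph.map_adj_apply

lemma edge_of_map {f : W ↪ V} {H : SimpleGraph W} {e : Sym2 V}
    (he : e ∈ (H.map f).edgeSet) : ∃ e', e' ∈ H.edgeSet ∧ Sym2.map f e' = e := by
  induction e with
  | h x y =>
    rw [SimpleGraph.mem_edgeSet, SimpleGraph.map_adj] at he
    obtain ⟨x', y', hadj, hx, hy⟩ := he
    exact ⟨s(x', y'), hadj, by simp [Sym2.map_pair_eq, hx, hy]⟩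

lemma cnt_map (f : W ↪ V) (H : SimpleGraph W) (k : ℕ) :
    cnt (H.map f) (Finset.univ : Finset V) k = cnt H (Finset.univ : Finset W) k := by
  classical
  have hinj : Function.Injective (Sym2.map f) := Sym2.map.injective f.injective
  rw [cnt, cnt]
  symm
  refine Finset.card_bij (fun s _ => s.image (Sym2.map f)) ?_ ?_ ?_
  · -- maps into
    intro s hs
    rw [mem_mset] at hs ⊢
    obtain ⟨hc, h1, h2, h3⟩ := hs
    refine ⟨by rw [Finset.card_image_of_injective s hinj, hc], ?_, ?_, ?_⟩
    · intro e he
      obtain ⟨e', he', rfl⟩ := Finset.mem_image.mp he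
      exact (mem_edgeSet_map_iff f H e').mpr (h1 e' he')
    · intro e he x hx
      exact Finset.mem_univ x
    · intro e he g hg heg x hxe hxg
      obtain ⟨e', he', rfl⟩ := Finset.mem_image.mp he
      obtain ⟨g', hg', rfl⟩ := Finset.mem_image.mp hg
      obtain ⟨a, ha, hfa⟩ := Sym2.mem_map.mp hxe
      obtain ⟨b, hb, hfb⟩ := Sym2.mem_map.mp hxg
      have hab : a = b := f.injective (by rw [hfa, hfb])
      subst hab
      have he'g' : e' ≠ g' := fun h => heg (by rw [h])
      exact h3 e' he' g' hg' he'g' a ha hb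
  · -- injective
    intro s hs s' hs' heq
    exact Finset.image_injective hinj heq
  · -- surjective
    intro t ht
    rw [mem_mset] at ht
    obtain ⟨hc, h1, h2, h3⟩ := ht
    have hrange : ∀ e ∈ t, e ∈ Set.range (Sym2.map f) := by
      intro e he
      obtain ⟨e', _, he'2⟩ := edge_of_map (h1 e he)
      exact ⟨e', he'2⟩
    refine ⟨t.preimage (Sym2.map f) hinj.injOn, ?_, ?_⟩
    · rw [mem_mset]
      have himg : (t.preimage (Sym2.map f) hinj.injOn).image (Sym2.map f) = t := by
        rw [Finset.image_preimage]
        exact Finset.filter_true_of_mem (fun e he => hrange e he)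
      refine ⟨?_, ?_, ?_, ?_⟩
      · have hcc : (t.preimage (Sym2.map ⇑f) hinj.injOn).card = t.card := by
          conv_rhs => rw [← himg]
          rw [Finset.card_image_of_injective _ hinj]
        rw [hcc, hc]
      · intro e' he'
        have : Sym2.map f e' ∈ t := Finset.mem_preimage.mp he'
        exact (mem_edgeSet_map_iff f H e').mp (h1 _ this)
      · intro e' he' x hx
        exact Finset.mem_univ x
      · intro e' he' g' hg' hne x hxe hxg
        have hte : Sym2.map f e' ∈ t := Finset.mem_preimage.mp he'
        have htg : Sym2.map f g' ∈ t := Finset.mem_preimage.mp hg'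
        have hmapne : Sym2.map f e' ≠ Sym2.map f g' := fun h => hne (hinj h)
        exact h3 _ hte _ htg hmapne (f x) (Sym2.mem_map.mpr ⟨x, hxe, rfl⟩)
          (Sym2.mem_map.mpr ⟨x, hxg, rfl⟩)
    · show (t.preimage (Sym2.map ⇑f) hinj.injOn).image (Sym2.map ⇑f) = t
      rw [Finset.image_preimage]
      exact Finset.filter_true_of_mem (fun e he => hrange e he)

lemma mp_map (f : W ↪ V) (H : SimpleGraph W) :
    mp (H.map f) (Finset.univ : Finset V) =
      X ^ (Fintype.card V - Fintype.card W) * mp H (Finset.univ : Finset W) := by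
  classical
  have hWV : Fintype.card W ≤ Fintype.card V := Fintype.card_le_of_embedding f
  have hd : (Finset.univ : Finset W).card + 1 ≤ (Finset.univ : Finset V).card + 1 := by
    simp only [Finset.card_univ]
    omega
  rw [mp, mp_eq_sum_range H (Finset.univ : Finset W) hd, Finset.mul_sum]
  refine Finset.sum_congr rfl ?_
  intro k hk
  rw [cnt_map f H k]
  by_cases hc : cnt H (Finset.univ : Finset W) k = 0
  · simp [hc]
  · have h2k : 2 * k ≤ Fintype.card W := by
      by_contra hcon
      refine hc (cnt_eq_zero' ?_)
      rw [Finset.card_univ]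
      omega
    rw [mul_comm (X ^ (Fintype.card V - Fintype.card W)) _, mul_assoc, ← pow_add]
    congr 2
    simp only [Finset.card_univ]
    omega

end MP10

namespace MPGlue
open MP MP2 MP3 MP4 MP5 MP6 MP7 MP8 MP9 MP10 Finset Polynomial

variable {V : Type*} [Fintype V] [DecidableEq V]

lemma matchingCount_eq (G : SimpleGraph V) (k : ℕ) :
    matchingCount G k = cnt G Finset.univ k := by
  classical
  rw [matchingCount, cnt, mset, Nat.card_eq_fintype_card, Fintype.card_subtype]
  congr 1
  apply Finset.filter_congr
  intro s _
  simp only [good]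
  constructor
  · rintro ⟨h1, h2, h3⟩
    exact ⟨h1, h2, fun e he x hx => Finset.mem_univ x, h3⟩
  · rintro ⟨h1, h2, -, h3⟩
    exact ⟨h1, h2, h3⟩

lemma matchPoly_eq (G : SimpleGraph V) : matchPoly G = mp G Finset.univ := by
  rw [matchPoly, mp]
  simp only [Finset.card_univ]
  refine Finset.sum_congr rfl ?_
  intro k _
  rw [matchingCount_eq]

lemma maxRoot_eq (G : SimpleGraph V) : maxRoot G = tt G Finset.univ := by
  rw [maxRoot, tt, matchPoly_eq]

end MPGlue

/-- If `H` embeds as a subgraph of `G` (both nonempty), then `t(H) ≤ t(G)`. -/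
theorem maxRoot_le_of_subgraph {V W : Type*} [Fintype V] [Fintype W] [Nonempty V] [Nonempty W]
    (G : SimpleGraph V) (H : SimpleGraph W) (f : W ↪ V)
    (hf : ∀ a b, H.Adj a b → G.Adj (f a) (f b)) :
    maxRoot H ≤ maxRoot G := by
  classical
  set H' := H.map f with hH'
  have hle : H' ≤ G := by
    intro x y hxy
    rw [hH', SimpleGraph.map_adj] at hxy
    obtain ⟨a, b, hab, rfl, rfl⟩ := hxy
    exact hf a b hab
  have e3 : MP6.tt H (Finset.univ : Finset W) ≤ MP6.tt H' (Finset.univ : Finset V) := by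
    have hsub : {x : ℝ | (MP3.mp H (Finset.univ : Finset W)).eval x = 0} ⊆
        {x : ℝ | (MP3.mp H' (Finset.univ : Finset V)).eval x = 0} := by
      intro x hx
      simp only [Set.mem_setOf_eq] at hx ⊢
      rw [hH', MP10.mp_map f H]
      simp [hx]
    exact csSup_le_csSup (MP6.roots_bddAbove H' Finset.univ)
      (MP6.roots_nonempty H Finset.univ_nonempty) hsub
  calc maxRoot H = MP6.tt H Finset.univ := MPGlue.maxRoot_eq H
    _ ≤ MP6.tt H' Finset.univ := e3
    _ ≤ MP6.tt G Finset.univ := MP9.tt_mono hle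
    _ = maxRoot G := (MPGlue.maxRoot_eq G).symm
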